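/- Error-propagation identity: Let (uⁿ, gⁿ, qⁿ) and (vⁿ, ρⁿ, ξⁿ) be two sequences both satisfying the optimality conditions of the primal-dual algorithm (with selected subgradients), and set u_eⁿ = uⁿ - vⁿ, g_eⁿ = gⁿ - ρⁿ, q_eⁿ = qⁿ - ξⁿ. Then 0 = (1/2τ)(‖u_eⁿ⁺¹‖² - ‖u_eⁿ‖²) + (1/2σ)(‖q_eⁿ⁺¹‖² - ‖q_eⁿ‖²) + ⟨q_eⁿ⁺¹, Ku_eⁿ⁺¹⟩ - ⟨q_eⁿ, Kū_eⁿ⟩ + (1/2τ)‖u_eⁿ⁺¹ - u_eⁿ‖² - (σθ/2)(‖Ku_eⁿ‖² - ‖Ku_eⁿ⁻¹‖²) - (σ(θ+θ²)/2)‖Ku_eⁿ - Ku_eⁿ⁻¹‖² + ⟨∂G(uⁿ⁺¹) - ∂G(vⁿ⁺¹), uⁿ⁺¹ - vⁿ⁺¹⟩ - (σ/2)‖Ku_eⁿ‖² + ⟨∂F(gⁿ⁺¹) - ∂F(ρⁿ⁺¹), gⁿ⁺¹ - ρⁿ⁺¹⟩ + (σ/2)‖g_eⁿ⁺¹‖².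 -/

import Mathlib

open Filter Topology

/-- The regular (Fréchet) subdifferential of `E` at `g`. -/
noncomputable def regSubdiff {X : Type*} [NormedAddCommGroup X] [InnerProductSpace ℝ X]
    (E : X → ℝ) (g : X) : Set X :=
  {ξ | 0 ≤ Filter.liminf
    (fun ρ => (E ρ - E g - (inner ℝ ξ (ρ - g) : ℝ)) / ‖ρ - g‖) (nhdsWithin g {g}ᶜ)}

/-- Error-propagation identity (Lemma 3 of the paper): for two sequences
`(uⁿ, gⁿ, qⁿ)` and `(vⁿ, ρⁿ, ξⁿ)` both satisfying the optimality conditions of the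
PDHG algorithm with selected subgradients `dG, dF` resp. `dG', dF'`, the error
variables `u_eⁿ = uⁿ - vⁿ`, `g_eⁿ = gⁿ - ρⁿ`, `q_eⁿ = qⁿ - ξⁿ` satisfy the stated
algebraic identity. -/

lemma pdhg_key {X Y : Type*} [NormedAddCommGroup X] [InnerProductSpace ℝ X] [FiniteDimensional ℝ X]
    [NormedAddCommGroup Y] [InnerProductSpace ℝ Y] [FiniteDimensional ℝ Y]
    (K : X →L[ℝ] Y) (σ τ θ : ℝ) (hτ : τ ≠ 0) (hσ : σ ≠ 0)
    (a b c : X) (p G2 : Y) :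
    (0 : ℝ) =
      1 / (2 * τ) * (‖c‖ ^ 2 - ‖b‖ ^ 2)
      + 1 / (2 * σ) * (‖p + σ • (K (b + θ • (b - a)) - G2)‖ ^ 2 - ‖p‖ ^ 2)
      + (inner ℝ (p + σ • (K (b + θ • (b - a)) - G2)) (K c) : ℝ)
      - (inner ℝ p (K (b + θ • (b - a))) : ℝ)
      + 1 / (2 * τ) * ‖c - b‖ ^ 2
      - σ * θ / 2 * (‖K b‖ ^ 2 - ‖K a‖ ^ 2)
      - σ * (θ + θ ^ 2) / 2 * ‖K b - K a‖ ^ 2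
      + (inner ℝ (-(τ⁻¹ • (c - b)) - (ContinuousLinearMap.adjoint K) (p + σ • (K (b + θ • (b - a)) - G2))) c : ℝ)
      - σ / 2 * ‖K b‖ ^ 2
      + (inner ℝ (p + σ • (K (b + θ • (b - a)) - G2)) G2 : ℝ)
      + σ / 2 * ‖G2‖ ^ 2 := by
  simp only [← real_inner_self_eq_norm_sq]
  simp only [map_add, map_sub, map_smul, inner_sub_left, inner_sub_right, inner_add_left,
    inner_add_right, real_inner_smul_left, real_inner_smul_right, inner_neg_left,
    ContinuousLinearMap.adjoint_inner_left]
  simp only [real_inner_comm]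
  field_simp
  ring

theorem pdhg_error_propagation_identity
    {X Y : Type*} [NormedAddCommGroup X] [InnerProductSpace ℝ X] [FiniteDimensional ℝ X]
    [NormedAddCommGroup Y] [InnerProductSpace ℝ Y] [FiniteDimensional ℝ Y]
    (K : X →L[ℝ] Y) (F : Y → ℝ) (G : X → ℝ) (σ τ θ : ℝ)
    (hτ : 0 < τ) (hσ : 0 < σ) (hθ0 : 0 ≤ θ) (hθ1 : θ ≤ 1)
    (u : ℕ → X) (g q : ℕ → Y) (ubar : ℕ → X) (dG : ℕ → X) (dF : ℕ → Y)
    (v : ℕ → X) (ρ ξ : ℕ → Y) (vbar : ℕ → X) (dG' : ℕ → X) (dF' : ℕ → Y)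
    (hdF : ∀ n, dF (n + 1) ∈ regSubdiff F (g (n + 1)))
    (hdG : ∀ n, dG (n + 1) ∈ regSubdiff G (u (n + 1)))
    (hdF' : ∀ n, dF' (n + 1) ∈ regSubdiff F (ρ (n + 1)))
    (hdG' : ∀ n, dG' (n + 1) ∈ regSubdiff G (v (n + 1)))
    (hopt1F : ∀ n, (0 : Y) = σ • (g (n + 1) - K (ubar n)) + dF (n + 1) - q n)
    (hq1 : ∀ n, q (n + 1) = q n + σ • (K (ubar n) - g (n + 1)))
    (hopt1G : ∀ n, (0 : X) = τ⁻¹ • (u (n + 1) - u n)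
      + (ContinuousLinearMap.adjoint K) (q (n + 1)) + dG (n + 1))
    (hubar1 : ∀ n, ubar (n + 1) = u (n + 1) + θ • (u (n + 1) - u n))
    (hopt2F : ∀ n, (0 : Y) = σ • (ρ (n + 1) - K (vbar n)) + dF' (n + 1) - ξ n)
    (hq2 : ∀ n, ξ (n + 1) = ξ n + σ • (K (vbar n) - ρ (n + 1)))
    (hopt2G : ∀ n, (0 : X) = τ⁻¹ • (v (n + 1) - v n)
      + (ContinuousLinearMap.adjoint K) (ξ (n + 1)) + dG' (n + 1))
    (hvbar1 : ∀ n, vbar (n + 1) = v (n + 1) + θ • (v (n + 1) - v n)) :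
    ∀ m : ℕ,
      (0 : ℝ) =
        1 / (2 * τ) * (‖u (m + 2) - v (m + 2)‖ ^ 2 - ‖u (m + 1) - v (m + 1)‖ ^ 2)
        + 1 / (2 * σ) * (‖q (m + 2) - ξ (m + 2)‖ ^ 2 - ‖q (m + 1) - ξ (m + 1)‖ ^ 2)
        + (inner ℝ (q (m + 2) - ξ (m + 2)) (K (u (m + 2) - v (m + 2))) : ℝ)
        - (inner ℝ (q (m + 1) - ξ (m + 1)) (K (ubar (m + 1) - vbar (m + 1))) : ℝ)
        + 1 / (2 * τ) * ‖(u (m + 2) - v (m + 2)) - (u (m + 1) - v (m + 1))‖ ^ 2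
        - σ * θ / 2 * (‖K (u (m + 1) - v (m + 1))‖ ^ 2 - ‖K (u m - v m)‖ ^ 2)
        - σ * (θ + θ ^ 2) / 2 * ‖K (u (m + 1) - v (m + 1)) - K (u m - v m)‖ ^ 2
        + (inner ℝ (dG (m + 2) - dG' (m + 2)) (u (m + 2) - v (m + 2)) : ℝ)
        - σ / 2 * ‖K (u (m + 1) - v (m + 1))‖ ^ 2
        + (inner ℝ (dF (m + 2) - dF' (m + 2)) (g (m + 2) - ρ (m + 2)) : ℝ)
        + σ / 2 * ‖g (m + 2) - ρ (m + 2)‖ ^ 2 := by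
  intro m
  have e1 : ubar (m + 1) - vbar (m + 1)
      = (u (m + 1) - v (m + 1)) + θ • ((u (m + 1) - v (m + 1)) - (u m - v m)) := by
    rw [hubar1 m, hvbar1 m]; module
  have e2 : q (m + 2) - ξ (m + 2)
      = (q (m + 1) - ξ (m + 1)) + σ • (K ((u (m + 1) - v (m + 1))
          + θ • ((u (m + 1) - v (m + 1)) - (u m - v m))) - (g (m + 2) - ρ (m + 2))) := by
    rw [hq1 (m + 1), hq2 (m + 1), ← e1]
    simp only [map_sub]
    module
  have e3 : dF (m + 2) - dF' (m + 2) = q (m + 2) - ξ (m + 2) := by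
    have h1 := hopt1F (m + 1)
    have h2 := hopt2F (m + 1)
    rw [hq1 (m + 1), hq2 (m + 1)]
    linear_combination (norm := module) -h1 + h2
  have e4 : dG (m + 2) - dG' (m + 2)
      = -(τ⁻¹ • ((u (m + 2) - v (m + 2)) - (u (m + 1) - v (m + 1))))
        - (ContinuousLinearMap.adjoint K) (q (m + 2) - ξ (m + 2)) := by
    have h1 := hopt1G (m + 1)
    have h2 := hopt2G (m + 1)
    simp only [map_sub]
    linear_combination (norm := module) -h1 + h2
  rw [e4, e3, e1, e2]
  exact pdhg_key K σ τ θ hτ.ne' hσ.ne' _ _ _ _ _
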